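/- Let B be a commutative Noetherian ring, let (b_1,…,b_n) be a unimodular n-row over B with n ≥ 2, let y ∈ B satisfy Bb_1 + By = B, and let ν_1,…,ν_p ⊆ B be prime ideals. Then there exist an element b in the ideal Bb_2 + ⋯ + Bb_n and an infinite strictly increasing sequence of natural numbers c_1 < c_2 < ⋯ such that b_1 + b·y^{c_j} ∉ ν_i for every i = 1,…,p and every j ≥ 1. -/

import Mathlib

open Ideal

private lemma coset_avoid_aux {B : Type*} [CommRing B] (I : Ideal B) (x : B) :
    ∀ (m : ℕ) (L : List (Ideal B)), L.length ≤ m → (∀ ν ∈ L, ν.IsPrime) →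
      (∀ ν ∈ L, x ∈ ν → ¬ I ≤ ν) → ∃ a ∈ I, ∀ ν ∈ L, x + a ∉ ν := by
  intro m
  induction m with
  | zero =>
    intro L hL _ _
    have : L = [] := List.length_eq_zero_iff.mp (Nat.le_zero.mp hL)
    subst this
    exact ⟨0, I.zero_mem, by simp⟩
  | succ m ih =>
    intro L hL hprime hcond
    classical
    match L with
    | [] => exact ⟨0, I.zero_mem, by simp⟩
    | ν :: L' =>
      simp only [List.length_cons, Nat.succ_le_succ_iff] at hL
      by_cases hsub : ∃ ν' ∈ L', ν' ≤ ν
      · obtain ⟨ν', hν'L, hle⟩ := hsub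
        have hlen : (ν :: L'.erase ν').length ≤ m := by
          simp only [List.length_cons]
          have h1 := List.length_erase_of_mem hν'L
          have h2 : 0 < L'.length := List.length_pos_of_mem hν'L
          omega
        have hstep : ∀ μ ∈ ν :: L'.erase ν', μ ∈ ν :: L' := by
          intro μ hμ
          rcases List.mem_cons.mp hμ with h | h
          · exact List.mem_cons.mpr (Or.inl h)
          · exact List.mem_cons.mpr (Or.inr (List.mem_of_mem_erase h))
        obtain ⟨a, haI, ha⟩ := ih (ν :: L'.erase ν') hlen
          (fun μ hμ => hprime μ (hstep μ hμ)) (fun μ hμ => hcond μ (hstep μ hμ))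
        refine ⟨a, haI, ?_⟩
        intro μ hμ
        rcases List.mem_cons.mp hμ with rfl | hμL'
        · exact ha μ (List.mem_cons_self)
        · by_cases hμν' : μ = ν'
          · subst hμν'
            exact fun h => ha ν (List.mem_cons_self) (hle h)
          · exact ha μ (List.mem_cons.mpr (Or.inr (List.mem_erase_of_ne hμν' |>.mpr hμL')))
      · obtain ⟨a, haI, ha⟩ := ih L' hL (fun μ hμ => hprime μ (List.mem_cons_of_mem _ hμ))
          (fun μ hμ => hcond μ (List.mem_cons_of_mem _ hμ))
        by_cases hx : x + a ∈ ν
        · have hprimeν : ν.IsPrime := hprime ν (List.mem_cons_self)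
          have hIν : ¬ I ≤ ν := by
            intro h
            have hxν : x ∈ ν := by
              have := ν.sub_mem hx (h haI); simpa using this
            exact hcond ν (List.mem_cons_self) hxν h
          have hnle : ¬ (I * (L' : Multiset (Ideal B)).prod ≤ ν) := by
            intro h
            rcases hprimeν.mul_le.mp h with h | h
            · exact hIν h
            · rcases hprimeν.multiset_prod_le.mp h with ⟨μ, hμ, hμle⟩
              exact hsub ⟨μ, by simpa using hμ, hμle⟩
          obtain ⟨e, heI, heν⟩ := SetLike.not_le_iff_exists.mp hnle
          refine ⟨a + e, I.add_mem haI (Ideal.mul_le_left heI), ?_⟩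
          intro μ hμ
          rcases List.mem_cons.mp hμ with rfl | hμL'
          · intro hcon
            have : e ∈ μ := by
              have := μ.sub_mem hcon hx; rw [show x + (a + e) - (x + a) = e by ring] at this
              exact this
            exact heν this
          · have heμ : e ∈ μ := by
              have h1 : (L' : Multiset (Ideal B)).prod ≤ μ := by
                refine le_trans Ideal.multiset_prod_le_inf (Multiset.inf_le ?_)
                simpa using hμL'
              exact h1 (Ideal.mul_le_right heI)
            intro hcon
            have : x + a ∈ μ := by
              have := μ.sub_mem hcon heμ; rw [show x + (a + e) - e = x + a by ring] at this
              exact this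
            exact ha μ hμL' this
        · exact ⟨a, haI, fun μ hμ => by
            rcases List.mem_cons.mp hμ with rfl | hμL'
            · exact hx
            · exact ha μ hμL'⟩

/-- Avoidance corollary for unimodular rows. -/
theorem avoidance_corollary
    {B : Type*} [CommRing B] [IsNoetherianRing B]
    (n : ℕ) (hn : 2 ≤ n) (b : Fin n → B)
    (hb : Ideal.span (Set.range b) = ⊤)
    (y : B) (hy : Ideal.span {b ⟨0, by omega⟩, y} = ⊤)
    (p : ℕ) (ν : Fin p → Ideal B) (hν : ∀ i, (ν i).IsPrime) :
    ∃ a ∈ Ideal.span (b '' { i : Fin n | (i : ℕ) ≠ 0 }),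
      ∃ c : ℕ → ℕ, StrictMono c ∧
        ∀ (i : Fin p) (j : ℕ), b ⟨0, by omega⟩ + a * y ^ (c j) ∉ ν i := by
  classical
  have h0 : (0 : ℕ) < n := by omega
  set I : Ideal B := Ideal.span (b '' { i : Fin n | (i : ℕ) ≠ 0 }) with hIdef
  -- Step 1: coset prime avoidance
  have hcond : ∀ μ ∈ (List.finRange p).map ν, b ⟨0, h0⟩ ∈ μ → ¬ I ≤ μ := by
    intro μ hμ hb0μ hIμ
    obtain ⟨i, _, rfl⟩ := List.mem_map.mp hμ
    have hle : Ideal.span (Set.range b) ≤ ν i := by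
      rw [Ideal.span_le]
      rintro _ ⟨k, rfl⟩
      by_cases hk : (k : ℕ) = 0
      · have hk' : k = ⟨0, h0⟩ := Fin.ext hk
        rw [hk']; exact hb0μ
      · exact hIμ (Ideal.subset_span ⟨k, hk, rfl⟩)
    rw [hb] at hle
    exact (hν i).ne_top (top_le_iff.mp hle)
  obtain ⟨a, haI, ha⟩ := coset_avoid_aux I (b ⟨0, h0⟩) ((List.finRange p).map ν).length
      ((List.finRange p).map ν) le_rfl
      (by rintro μ hμ; obtain ⟨i, _, rfl⟩ := List.mem_map.mp hμ; exact hν i) hcond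
  have ha' : ∀ i, b ⟨0, h0⟩ + a ∉ ν i := fun i =>
    ha (ν i) (List.mem_map.mpr ⟨i, List.mem_finRange i, rfl⟩)
  -- Step 2: exponents
  let D : Fin p → ℕ := fun i => if h : ∃ d, 0 < d ∧ y ^ d - 1 ∈ ν i then h.choose else 1
  have hDpos : ∀ i, 0 < D i := by
    intro i
    by_cases h : ∃ d, 0 < d ∧ y ^ d - 1 ∈ ν i
    · simp only [D, dif_pos h]; exact h.choose_spec.1
    · simp only [D, dif_neg h]; exact one_pos
  have hDmem : ∀ i, (∃ d, 0 < d ∧ y ^ d - 1 ∈ ν i) → y ^ (D i) - 1 ∈ ν i := by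
    intro i h
    simp only [D, dif_pos h]; exact h.choose_spec.2
  set N : ℕ := ∏ i, D i with hNdef
  have hNpos : 0 < N := Finset.prod_pos (fun i _ => hDpos i)
  let K : Fin p → ℕ := fun i => if h : ∃ k, b ⟨0, h0⟩ + a * y ^ (k * N) ∈ ν i then h.choose else 0
  set Km : ℕ := Finset.univ.sup K with hKmdef
  refine ⟨a, haI, fun j => (Km + j + 1) * N, ?_, ?_⟩
  · intro j j' hjj'
    exact (Nat.mul_lt_mul_right hNpos).mpr (by omega)
  intro i j hmem
  set m : ℕ := Km + j + 1 with hmdef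
  have hprime := hν i
  have hmem' : b ⟨0, h0⟩ + a * y ^ (m * N) ∈ ν i := hmem
  clear hmem
  by_cases hyi : y ∈ ν i
  · have h1 : y ^ (m * N) ∈ ν i :=
      Ideal.pow_mem_of_mem _ hyi _ (Nat.mul_pos (by omega) hNpos)
    have h2 : b ⟨0, h0⟩ ∈ ν i := by
      have h3 := (ν i).sub_mem hmem' (Ideal.mul_mem_left _ a h1)
      simpa using h3
    have hle : Ideal.span {b ⟨0, h0⟩, y} ≤ ν i := by
      rw [Ideal.span_le]
      rintro z hz
      simp only [Set.mem_insert_iff, Set.mem_singleton_iff] at hz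
      rcases hz with rfl | rfl
      · exact h2
      · exact hyi
    rw [hy] at hle
    exact hprime.ne_top (top_le_iff.mp hle)
  · have hanot : a ∉ ν i := by
      intro haν
      have h2 : b ⟨0, h0⟩ ∈ ν i := by
        have h3 := (ν i).sub_mem hmem' (Ideal.mul_mem_right (y ^ (m * N)) _ haν)
        simpa using h3
      exact ha' i ((ν i).add_mem h2 haν)
    by_cases hfin : ∃ d, 0 < d ∧ y ^ d - 1 ∈ ν i
    · have hd : y ^ (D i) - 1 ∈ ν i := hDmem i hfin
      have hdvd : D i ∣ m * N :=
        (Finset.dvd_prod_of_mem D (Finset.mem_univ i)).mul_left m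
      obtain ⟨t, ht⟩ := hdvd
      have hpw : y ^ (D i) - 1 ∣ y ^ (m * N) - 1 := by
        rw [ht, pow_mul]
        simpa using sub_dvd_pow_sub_pow (y ^ D i) 1 t
      have hmem2 : y ^ (m * N) - 1 ∈ ν i := by
        obtain ⟨u, hu⟩ := hpw
        rw [hu]; exact Ideal.mul_mem_right _ _ hd
      have hfinal : b ⟨0, h0⟩ + a ∈ ν i := by
        have h3 := (ν i).sub_mem hmem' (Ideal.mul_mem_left _ a hmem2)
        have heq : ∀ z : B, z + a * y ^ (m * N) - a * (y ^ (m * N) - 1) = z + a := by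
          intro z; ring
        rw [heq] at h3
        exact h3
      exact ha' i hfinal
    · have hex : ∃ k, b ⟨0, h0⟩ + a * y ^ (k * N) ∈ ν i := ⟨m, hmem'⟩
      have hKi : b ⟨0, h0⟩ + a * y ^ (K i * N) ∈ ν i := by
        have : K i = hex.choose := by simp only [K, dif_pos hex]
        rw [this]; exact hex.choose_spec
      have hKlt : K i < m := lt_of_le_of_lt (Finset.le_sup (f := K) (Finset.mem_univ i)) (by omega)
      have hmnN : m * N = K i * N + (m - K i) * N := by
        rw [← Nat.add_mul]; congr 1; omega
      have hdiff : a * y ^ (K i * N) * (y ^ ((m - K i) * N) - 1) ∈ ν i := by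
        have h3 := (ν i).sub_mem hmem' hKi
        have heq : ∀ z : B, z + a * y ^ (m * N) - (z + a * y ^ (K i * N))
            = a * y ^ (K i * N) * (y ^ ((m - K i) * N) - 1) := by
          intro z; rw [hmnN, pow_add]; ring
        rw [heq] at h3
        exact h3
      have hnot1 : a * y ^ (K i * N) ∉ ν i := by
        intro h
        rcases hprime.mem_or_mem h with h | h
        · exact hanot h
        · exact hyi (hprime.mem_of_pow_mem _ h)
      have hlast : y ^ ((m - K i) * N) - 1 ∈ ν i := by
        rcases hprime.mem_or_mem hdiff with h | h
        · exact absurd h hnot1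
        · exact h
      exact hfin ⟨(m - K i) * N, Nat.mul_pos (by omega) hNpos, hlast⟩
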